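/- Let X be a measurable space, n ∈ ℕ, and F a set of measurable functions X → [0,∞]. Then the double polars coincide: { s_n(g) | g ∈ (F^{⊗n})°° }°° = { s_n(g) | g ∈ F^{⊗n} }°°, where all polars are taken on the product measurable space Fin n → X, the polar of a set of functions being the set of s-finite measures integrating every member to at most 1, and the polar of a set of measures the set of measurable functions integrating to at most 1 against every member. -/

import Mathlib

open MeasureTheory
open scoped ENNReal

/-- The polar of a set of `[0,∞]`-valued functions on `W`: the s-finite measures
integrating every member to at most `1`. -/
def funPolar {W : Type*} [MeasurableSpace W] (G : Set (W → ℝ≥0∞)) : Set (Measure W) :=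
  {μ | SFinite μ ∧ ∀ g ∈ G, ∫⁻ w, g w ∂μ ≤ 1}

/-- The polar of a set of measures on `W`: the measurable `[0,∞]`-valued functions
integrating to at most `1` against every member. -/
def measPolar {W : Type*} [MeasurableSpace W] (M : Set (Measure W)) : Set (W → ℝ≥0∞) :=
  {f | Measurable f ∧ ∀ μ ∈ M, ∫⁻ w, f w ∂μ ≤ 1}

/-- Double polar of a set of functions. -/
def biPolar {W : Type*} [MeasurableSpace W] (G : Set (W → ℝ≥0∞)) : Set (W → ℝ≥0∞) :=
  measPolar (funPolar G)

/-- `F^{⊗n} = { f₁ ⊗ ⋯ ⊗ fₙ | all fᵢ ∈ F }`, where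
`(f₁ ⊗ ⋯ ⊗ fₙ)(x) = ∏ i, fᵢ (x i)` on `Fin n → X`. -/
def tensorPow {X : Type*} (F : Set (X → ℝ≥0∞)) (n : ℕ) : Set ((Fin n → X) → ℝ≥0∞) :=
  {g | ∃ f : Fin n → X → ℝ≥0∞, (∀ i, f i ∈ F) ∧ g = fun x => ∏ i, f i (x i)}

/-- The barycentre `s_n(g)(x) = (n!)⁻¹ Σ_{σ ∈ Perm (Fin n)} g (x ∘ σ)`. -/
noncomputable def bary {X : Type*} (n : ℕ) (g : (Fin n → X) → ℝ≥0∞) :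
    (Fin n → X) → ℝ≥0∞ :=
  fun x => (n.factorial : ℝ≥0∞)⁻¹ * ∑ σ : Equiv.Perm (Fin n), g (x ∘ σ)

/-- The symmetrization of a measure on `Fin n → X`. -/
noncomputable def symMeas {X : Type*} [MeasurableSpace X] (n : ℕ)
    (μ : Measure (Fin n → X)) : Measure (Fin n → X) :=
  ((n.factorial : ℝ≥0∞)⁻¹) • ∑ σ : Equiv.Perm (Fin n), Measure.map (fun x => x ∘ σ) μ

lemma measurable_comp_perm {X : Type*} [MeasurableSpace X] {n : ℕ} (σ : Equiv.Perm (Fin n)) :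
    Measurable (fun x : Fin n → X => x ∘ σ) :=
  measurable_pi_lambda _ fun i => measurable_pi_apply (σ i)

instance symMeas_sfinite {X : Type*} [MeasurableSpace X] (n : ℕ)
    (μ : Measure (Fin n → X)) [SFinite μ] : SFinite (symMeas n μ) := by
  have : ∀ s : Finset (Equiv.Perm (Fin n)),
      SFinite (∑ σ ∈ s, Measure.map (fun x : Fin n → X => x ∘ σ) μ) := by
    intro s
    induction s using Finset.induction with
    | empty => simpa using inferInstanceAs (SFinite (0 : Measure (Fin n → X)))
    | insert _ _ hns ih => rw [Finset.sum_insert hns]; infer_instance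
  have := this Finset.univ
  unfold symMeas
  infer_instance

lemma lintegral_bary {X : Type*} [MeasurableSpace X] {n : ℕ}
    (μ : Measure (Fin n → X)) {h : (Fin n → X) → ℝ≥0∞} (hh : Measurable h) :
    ∫⁻ x, bary n h x ∂μ = ∫⁻ y, h y ∂(symMeas n μ) := by
  simp only [bary, symMeas]
  rw [lintegral_smul_measure, lintegral_finset_sum_measure,
    lintegral_const_mul' _ _ (ENNReal.inv_ne_top.mpr (by exact_mod_cast n.factorial_ne_zero)),
    lintegral_finset_sum (f := fun (σ : Equiv.Perm (Fin n)) (x : Fin n → X) => h (x ∘ σ)) _ fun σ _ => hh.comp (measurable_comp_perm σ)]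
  congr 1
  exact Finset.sum_congr rfl fun σ _ => (lintegral_map hh (measurable_comp_perm σ)).symm

lemma tensorPow_measurable {X : Type*} [MeasurableSpace X] {n : ℕ} {F : Set (X → ℝ≥0∞)}
    (hF : ∀ f ∈ F, Measurable f) {g : (Fin n → X) → ℝ≥0∞} (hg : g ∈ tensorPow F n) :
    Measurable g := by
  obtain ⟨f, hf, rfl⟩ := hg
  exact Finset.measurable_prod _ fun i _ => (hF _ (hf i)).comp (measurable_pi_apply i)

/-- `{ s_n(g) | g ∈ (F^{⊗n})°° }°° = { s_n(g) | g ∈ F^{⊗n} }°°` on the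
product measurable space `Fin n → X`. -/
theorem biPolar_bary_image_biPolar_tensorPow
    {X : Type*} [MeasurableSpace X] (n : ℕ) (F : Set (X → ℝ≥0∞))
    (hF : ∀ f ∈ F, Measurable f) :
    biPolar (bary n '' biPolar (tensorPow F n)) = biPolar (bary n '' tensorPow F n) := by
  apply Set.Subset.antisymm
  · -- uses the symmetrization trick
    rintro f ⟨hfm, hf⟩
    refine ⟨hfm, ?_⟩
    rintro μ ⟨hsf, hμ⟩
    apply hf
    refine ⟨hsf, ?_⟩
    rintro _ ⟨h, ⟨hhm, hh2⟩, rfl⟩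
    rw [lintegral_bary μ hhm]
    apply hh2
    refine ⟨inferInstance, ?_⟩
    intro g hg
    rw [← lintegral_bary μ (tensorPow_measurable hF hg)]
    exact hμ _ ⟨g, hg, rfl⟩
  · -- monotonicity, since tensorPow ⊆ biPolar tensorPow
    rintro f ⟨hfm, hf⟩
    refine ⟨hfm, ?_⟩
    rintro μ ⟨hsf, hμ⟩
    refine hf μ ⟨hsf, ?_⟩
    rintro _ ⟨g, hg, rfl⟩
    exact hμ _ ⟨g, ⟨tensorPow_measurable hF hg, fun ν hν => hν.2 g hg⟩, rfl⟩
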